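/- arXiv:1802.03509 — 2 statements merged into one kernel-verified Lean document; each statement's English description precedes it below -/
import Mathlib

section
/- Let ⟨aⁱ : i < ω⟩ be an independent sequence of conditionally convergent real series, let ⟨xᵢ : i < ω⟩ be a sequence of real numbers, and let ⟨C_d : d ≥ 1⟩ be a nondecreasing sequence of positive constants such that each C_d satisfies the Polygonal Confinement property in dimension d. Define the poset P and its order as follows. A condition of P is a triple (f, d, ε) where: f is an injection from some n ∈ ℕ to ℕ; d is a positive integer; ε is a positive rational; ‖Σ_{k<n} ⟨aⁱ_{f(k)} : i < d⟩ − ⟨xᵢ : i < d⟩‖ < ε; and for all m ∈ ℕ∖range(f), ‖⟨aⁱ_m : i < d⟩‖ < ε/C_d. Set (g, e, δ) ≤ (f, d, ε) iff: g extends f; e ≥ d; for all m ≤ dom(g), ‖Σ_{k∈m∖dom(f)} ⟨aⁱ_{g(k)} : i < d⟩‖ < 2ε; and 2δ + ‖Σ_{k∈dom(g)∖dom(f)} ⟨aⁱ_{g(k)} : i < d⟩‖ ≤ 2ε. Then: for each condition (f, d, ε) ∈ P and each positive n ∈ ℕ, there exists a condition (g, d+1, δ) ≤ (f, d, ε) such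 that {0, …, n−1} ⊆ dom(g) ∩ range(g) and δ < 1/n. -/
open Filter

/-- A real series is conditionally convergent: its partial sums converge
but the series of absolute values diverges. -/
def CondConv (a : ℕ → ℝ) : Prop :=
  (∃ l : ℝ, Tendsto (fun N => ∑ n ∈ Finset.range N, a n) atTop (nhds l)) ∧
    ¬ Summable fun n => |a n|

/-- `C` satisfies the Polygonal Confinement property in dimension `d`. -/
def PolyConf (d : ℕ) (C : ℝ) : Prop :=
  ∀ n : ℕ, 0 < n → ∀ w : ℕ → EuclideanSpace ℝ (Fin d),
    (∑ k ∈ Finset.range n, w k) = 0 → (∀ k < n, ‖w k‖ ≤ 1) →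
    ∃ q : ℕ → ℕ, Set.BijOn q (Set.Ico 1 n) (Set.Ico 1 n) ∧
      ∀ j ≤ n, ‖w 0 + ∑ k ∈ Finset.Ico 1 j, w (q k)‖ ≤ C

/-- The vector `⟨aⁱ_m : i < d⟩ ∈ ℝ^d` (with the Euclidean norm). -/
def avec (a : ℕ → ℕ → ℝ) (d m : ℕ) : EuclideanSpace ℝ (Fin d) :=
  WithLp.toLp 2 (fun i => a i m)

/-- `⟨xᵢ : i < d⟩` as a vector of `ℝ^d`. -/
def xvec (x : ℕ → ℝ) (d : ℕ) : EuclideanSpace ℝ (Fin d) :=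
  WithLp.toLp 2 (fun i => x i)

/-- `(f, nf, d, ε)` is a condition of the poset `P`, where the finite injection `f`
is represented by a function `f : ℕ → ℕ` together with its domain `nf` (only the
values `f k` for `k < nf` matter). -/
def PCond (a : ℕ → ℕ → ℝ) (x : ℕ → ℝ) (C : ℕ → ℝ)
    (f : ℕ → ℕ) (nf d : ℕ) (ε : ℚ) : Prop :=
  Set.InjOn f (Set.Iio nf) ∧ 0 < d ∧ 0 < ε ∧
  ‖(∑ k ∈ Finset.range nf, avec a d (f k)) - xvec x d‖ < (ε : ℝ) ∧
  ∀ m : ℕ, m ∉ f '' (Set.Iio nf) → ‖avec a d m‖ < (ε : ℝ) / C d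

/-- The order of the poset `P`: `(g, ng, e, δ) ≤ (f, nf, d, ε)`. -/
def PLe (a : ℕ → ℕ → ℝ)
    (g : ℕ → ℕ) (ng e : ℕ) (δ : ℚ)
    (f : ℕ → ℕ) (nf d : ℕ) (ε : ℚ) : Prop :=
  nf ≤ ng ∧ (∀ k < nf, g k = f k) ∧ d ≤ e ∧
  (∀ m ≤ ng, ‖∑ k ∈ Finset.Ico nf m, avec a d (g k)‖ < 2 * (ε : ℝ)) ∧
  2 * (δ : ℝ) + ‖∑ k ∈ Finset.Ico nf ng, avec a d (g k)‖ ≤ 2 * (ε : ℝ)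


lemma condconv_tendsto_zero {a : ℕ → ℝ}
    (h : ∃ l : ℝ, Tendsto (fun N => ∑ n ∈ Finset.range N, a n) atTop (nhds l)) :
    Tendsto a atTop (nhds 0) := by
  obtain ⟨l, hl⟩ := h
  have h1 : Tendsto (fun N => ∑ n ∈ Finset.range (N + 1), a n) atTop (nhds l) :=
    hl.comp (tendsto_add_atTop_nat 1)
  have := h1.sub hl
  simp only [Finset.sum_range_succ, sub_self, add_sub_cancel_left] at this
  simpa using this

lemma norm_avec_le (a : ℕ → ℕ → ℝ) (e m : ℕ) :
    ‖avec a e m‖ ≤ ∑ i : Fin e, |a i m| := by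
  rw [EuclideanSpace.norm_eq]
  have h1 : ∑ i : Fin e, ‖avec a e m i‖ ^ 2 ≤ (∑ i : Fin e, |a i m|) ^ 2 := by
    have : ∀ i : Fin e, ‖avec a e m i‖ = |a i m| := fun i => by simp [avec, Real.norm_eq_abs]
    simp only [this]
    have hnn : ∀ i ∈ Finset.univ (α := Fin e), 0 ≤ |a i m| := fun i _ => abs_nonneg _
    calc ∑ i : Fin e, |a i m| ^ 2 ≤ ∑ i : Fin e, |a i m| * ∑ j : Fin e, |a j m| := by
          apply Finset.sum_le_sum
          intro i _
          rw [sq]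
          exact mul_le_mul_of_nonneg_left
            (Finset.single_le_sum hnn (Finset.mem_univ i)) (abs_nonneg _)
      _ = (∑ i : Fin e, |a i m|) ^ 2 := by rw [← Finset.sum_mul, sq]
  calc √(∑ i : Fin e, ‖avec a e m i‖ ^ 2) ≤ √((∑ i : Fin e, |a i m|) ^ 2) :=
        Real.sqrt_le_sqrt h1
    _ = ∑ i : Fin e, |a i m| := by
        rw [Real.sqrt_sq (Finset.sum_nonneg fun i _ => abs_nonneg _)]

lemma tendsto_norm_avec_zero (a : ℕ → ℕ → ℝ) (hcc : ∀ i, CondConv (a i)) (e : ℕ) :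
    Tendsto (fun m => ‖avec a e m‖) atTop (nhds 0) := by
  apply squeeze_zero (fun m => norm_nonneg _) (fun m => norm_avec_le a e m)
  have : Tendsto (fun m => ∑ i : Fin e, |a i m|) atTop (nhds (∑ _i : Fin e, (0:ℝ))) := by
    apply tendsto_finset_sum
    intro i _
    simpa using (condconv_tendsto_zero (hcc i).1).abs
  simpa using this

lemma eventually_avec_small (a : ℕ → ℕ → ℝ) (hcc : ∀ i, CondConv (a i)) (e : ℕ)
    {θ : ℝ} (hθ : 0 < θ) : ∃ N : ℕ, ∀ m, N ≤ m → ‖avec a e m‖ < θ := by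
  have h := (tendsto_norm_avec_zero a hcc e).eventually (eventually_lt_nhds hθ)
  rw [eventually_atTop] at h
  obtain ⟨N, hN⟩ := h
  exact ⟨N, fun m hm => by simpa using hN m hm⟩

lemma finite_large_avec (a : ℕ → ℕ → ℝ) (hcc : ∀ i, CondConv (a i)) (e : ℕ)
    {θ : ℝ} (hθ : 0 < θ) : {m : ℕ | θ ≤ ‖avec a e m‖}.Finite := by
  obtain ⟨N, hN⟩ := eventually_avec_small a hcc e hθ
  apply Set.Finite.subset (Set.finite_Iio N)
  intro m hm
  simp only [Set.mem_Iio]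
  by_contra hc
  exact absurd (hN m (le_of_not_gt hc)) (not_lt.mpr hm)




lemma euclidean_eq_sum_single (e : ℕ) (z : EuclideanSpace ℝ (Fin e)) :
    z = ∑ i : Fin e, z i • EuclideanSpace.single i (1:ℝ) := by
  have := (EuclideanSpace.basisFun (Fin e) ℝ).sum_repr z
  simp only [EuclideanSpace.basisFun_repr, EuclideanSpace.basisFun_apply] at this
  exact this.symm

lemma clm_apply_eq {e : ℕ} (φ : EuclideanSpace ℝ (Fin e) →L[ℝ] ℝ)
    (z : EuclideanSpace ℝ (Fin e)) :
    φ z = ∑ i : Fin e, z i * φ (EuclideanSpace.single i (1:ℝ)) := by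
  conv_lhs => rw [euclidean_eq_sum_single e z]
  rw [map_sum]
  congr 1
  ext i
  rw [map_smul, smul_eq_mul]

noncomputable def cOf (e : ℕ) (φ : EuclideanSpace ℝ (Fin e) →L[ℝ] ℝ) : ℕ → ℝ :=
  fun i => if h : i < e then φ (EuclideanSpace.single (⟨i, h⟩ : Fin e) (1:ℝ)) else 0

lemma finsum_cOf (a : ℕ → ℕ → ℝ) (e : ℕ) (φ : EuclideanSpace ℝ (Fin e) →L[ℝ] ℝ) (m : ℕ) :
    ∑ᶠ i, cOf e φ i * a i m = φ (avec a e m) := by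
  have hsupp : Function.support (fun i => cOf e φ i * a i m) ⊆ ↑(Finset.range e) := by
    intro i hi
    simp only [Function.mem_support] at hi
    simp only [Finset.coe_range, Set.mem_Iio]
    by_contra hc
    rw [cOf, dif_neg hc, zero_mul] at hi
    exact hi rfl
  rw [finsum_eq_finset_sum_of_support_subset _ hsupp, clm_apply_eq]
  rw [← Fin.sum_univ_eq_sum_range (fun i => cOf e φ i * a i m) e]
  congr 1
  ext i
  rw [cOf, dif_pos i.isLt]
  simp [avec, mul_comm]

lemma cOf_support_finite (e : ℕ) (φ : EuclideanSpace ℝ (Fin e) →L[ℝ] ℝ) :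
    (Function.support (cOf e φ)).Finite := by
  apply Set.Finite.subset (Set.finite_Iio e)
  intro i hi
  simp only [Function.mem_support] at hi
  simp only [Set.mem_Iio]
  by_contra hc
  rw [cOf, dif_neg hc] at hi
  exact hi rfl

lemma not_summable_abs_phi (a : ℕ → ℕ → ℝ)
    (hind : ∀ c : ℕ → ℝ, (Function.support c).Finite →
      (Summable fun n => |∑ᶠ i, c i * a i n|) → c = 0)
    {e : ℕ} {φ : EuclideanSpace ℝ (Fin e) →L[ℝ] ℝ} (hφ : φ ≠ 0) :
    ¬ Summable fun m => |φ (avec a e m)| := by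
  intro hs
  have hs' : Summable fun m => |∑ᶠ i, cOf e φ i * a i m| := by
    apply hs.congr
    intro m
    rw [finsum_cOf]
  have hc0 := hind _ (cOf_support_finite e φ) hs'
  apply hφ
  ext z
  rw [clm_apply_eq]
  have : ∀ i : Fin e, φ (EuclideanSpace.single i (1:ℝ)) = 0 := by
    intro i
    have := congrFun hc0 (i : ℕ)
    rw [cOf, dif_pos i.isLt] at this
    simpa using this
  simp [this]

lemma tendsto_partial_phi (a : ℕ → ℕ → ℝ)
    (hcc : ∀ i, (∃ l : ℝ, Tendsto (fun N => ∑ n ∈ Finset.range N, a i n) atTop (nhds l)))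
    {e : ℕ} (φ : EuclideanSpace ℝ (Fin e) →L[ℝ] ℝ) :
    ∃ l : ℝ, Tendsto (fun M => ∑ m ∈ Finset.range M, φ (avec a e m)) atTop (nhds l) := by
  choose l hl using hcc
  refine ⟨∑ i : Fin e, l i * φ (EuclideanSpace.single i (1:ℝ)), ?_⟩
  have key : ∀ M, ∑ m ∈ Finset.range M, φ (avec a e m)
      = ∑ i : Fin e, (∑ m ∈ Finset.range M, a i m) * φ (EuclideanSpace.single i (1:ℝ)) := by
    intro M
    calc ∑ m ∈ Finset.range M, φ (avec a e m)
        = ∑ m ∈ Finset.range M, ∑ i : Fin e, a i m * φ (EuclideanSpace.single i (1:ℝ)) := by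
          apply Finset.sum_congr rfl
          intro m _
          rw [clm_apply_eq]
          rfl
      _ = ∑ i : Fin e, ∑ m ∈ Finset.range M, a i m * φ (EuclideanSpace.single i (1:ℝ)) :=
          Finset.sum_comm
      _ = _ := by
          apply Finset.sum_congr rfl
          intro i _
          rw [Finset.sum_mul]
  rw [show (fun M => ∑ m ∈ Finset.range M, φ (avec a e m)) = fun M =>
      ∑ i : Fin e, (∑ m ∈ Finset.range M, a i m) * φ (EuclideanSpace.single i (1:ℝ)) from
      funext key]
  apply tendsto_finset_sum
  intro i _
  exact (hl i).mul_const _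

lemma max_abs_half (r : ℝ) : max r 0 = (|r| + r) / 2 := by
  rcases le_total r 0 with h | h
  · rw [max_eq_right h, abs_of_nonpos h]; ring
  · rw [max_eq_left h, abs_of_nonneg h]; ring

lemma tendsto_posparts (a : ℕ → ℕ → ℝ)
    (hcc : ∀ i, (∃ l : ℝ, Tendsto (fun N => ∑ n ∈ Finset.range N, a i n) atTop (nhds l)))
    (hind : ∀ c : ℕ → ℝ, (Function.support c).Finite →
      (Summable fun n => |∑ᶠ i, c i * a i n|) → c = 0)
    {e : ℕ} {φ : EuclideanSpace ℝ (Fin e) →L[ℝ] ℝ} (hφ : φ ≠ 0) (N : ℕ) :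
    Tendsto (fun M => ∑ m ∈ Finset.Ico N M, max (φ (avec a e m)) 0) atTop atTop := by
  set b : ℕ → ℝ := fun m => φ (avec a e m) with hb
  have habs : Tendsto (fun M => ∑ m ∈ Finset.range M, |b m|) atTop atTop := by
    rw [← not_summable_iff_tendsto_nat_atTop_of_nonneg (fun m => abs_nonneg (b m))]
    exact not_summable_abs_phi a hind hφ
  obtain ⟨l, hl⟩ := tendsto_partial_phi a hcc φ
  have key : ∀ M, N ≤ M → ∑ m ∈ Finset.Ico N M, max (b m) 0
      = ((∑ m ∈ Finset.range M, |b m| - ∑ m ∈ Finset.range N, |b m|)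
        + (∑ m ∈ Finset.range M, b m - ∑ m ∈ Finset.range N, b m)) / 2 := by
    intro M hM
    rw [← Finset.sum_Ico_eq_sub _ hM, ← Finset.sum_Ico_eq_sub _ hM, ← Finset.sum_add_distrib, Finset.sum_div]
    apply Finset.sum_congr rfl
    intro m _
    exact max_abs_half (b m)
  have h2 : Tendsto (fun M => ((∑ m ∈ Finset.range M, |b m| - ∑ m ∈ Finset.range N, |b m|)
        + (∑ m ∈ Finset.range M, b m - ∑ m ∈ Finset.range N, b m)) / 2) atTop atTop := by
    apply Tendsto.atTop_div_const (by norm_num : (0:ℝ) < 2)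
    apply Tendsto.atTop_add (g := fun M => ∑ m ∈ Finset.range M, b m - ∑ m ∈ Finset.range N, b m)
      (C := l - ∑ m ∈ Finset.range N, b m)
    · exact tendsto_atTop_add_const_right _ _ habs
    · exact hl.sub_const _
  apply h2.congr'
  filter_upwards [eventually_ge_atTop N] with M hM
  exact (key M hM).symm

lemma zonotope_dense (a : ℕ → ℕ → ℝ)
    (hcc : ∀ i, (∃ l : ℝ, Tendsto (fun N => ∑ n ∈ Finset.range N, a i n) atTop (nhds l)))
    (hind : ∀ c : ℕ → ℝ, (Function.support c).Finite →
      (Summable fun n => |∑ᶠ i, c i * a i n|) → c = 0)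
    (e N : ℕ) (y : EuclideanSpace ℝ (Fin e)) {η : ℝ} (hη : 0 < η) :
    ∃ M : ℕ, ∃ lam : ℕ → ℝ, (∀ m, 0 ≤ lam m ∧ lam m ≤ 1) ∧
      ‖(∑ m ∈ Finset.Ico N M, lam m • avec a e m) - y‖ < η := by
  classical
  set v : ℕ → EuclideanSpace ℝ (Fin e) := avec a e with hv
  set K : Set (EuclideanSpace ℝ (Fin e)) :=
    {z | ∃ M : ℕ, ∃ lam : ℕ → ℝ, (∀ m, 0 ≤ lam m ∧ lam m ≤ 1) ∧
      z = ∑ m ∈ Finset.Ico N M, lam m • v m} with hK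
  have hzero : (0 : EuclideanSpace ℝ (Fin e)) ∈ K := by
    refine ⟨N, fun _ => 0, fun m => by norm_num, ?_⟩
    simp
  have hconv : Convex ℝ K := by
    rintro z₁ ⟨M₁, lam₁, hlam₁, rfl⟩ z₂ ⟨M₂, lam₂, hlam₂, rfl⟩ t s ht hs hts
    refine ⟨max M₁ M₂, fun m => t * (if m < M₁ then lam₁ m else 0)
      + s * (if m < M₂ then lam₂ m else 0), ?_, ?_⟩
    · intro m
      constructor
      · apply add_nonneg <;> apply mul_nonneg <;> first
          | assumption
          | split <;> simp [hlam₁ m, hlam₂ m, (hlam₁ m).1, (hlam₂ m).1, le_refl]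
      · calc t * (if m < M₁ then lam₁ m else 0) + s * (if m < M₂ then lam₂ m else 0)
            ≤ t * 1 + s * 1 := by
              gcongr
              · split
                · exact (hlam₁ m).2
                · norm_num
              · split
                · exact (hlam₂ m).2
                · norm_num
          _ = 1 := by rw [mul_one, mul_one, hts]
    · have hsub : ∀ (M' : ℕ) (lam : ℕ → ℝ), M' ≤ max M₁ M₂ →
          ∑ m ∈ Finset.Ico N (max M₁ M₂), (if m < M' then lam m else 0) • v m
            = ∑ m ∈ Finset.Ico N M', lam m • v m := by
        intro M' lam hM'
        rw [← Finset.sum_subset (Finset.Ico_subset_Ico le_rfl hM')]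
        · apply Finset.sum_congr rfl
          intro m hm
          rw [if_pos (Finset.mem_Ico.mp hm).2]
        · intro m _ hm
          have : ¬ m < M' := by
            intro hc
            rcases Finset.mem_Ico.mp ‹m ∈ Finset.Ico N (max M₁ M₂)› with ⟨h1, _⟩
            exact hm (Finset.mem_Ico.mpr ⟨h1, hc⟩)
          rw [if_neg this, zero_smul]
      symm
      beta_reduce
      calc ∑ m ∈ Finset.Ico N (max M₁ M₂),
            (t * (if m < M₁ then lam₁ m else 0) + s * (if m < M₂ then lam₂ m else 0)) • v m
          = t • ∑ m ∈ Finset.Ico N (max M₁ M₂), (if m < M₁ then lam₁ m else 0) • v m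
            + s • ∑ m ∈ Finset.Ico N (max M₁ M₂), (if m < M₂ then lam₂ m else 0) • v m := by
            rw [Finset.smul_sum, Finset.smul_sum, ← Finset.sum_add_distrib]
            apply Finset.sum_congr rfl
            intro m _
            rw [add_smul, smul_smul, smul_smul]
        _ = t • ∑ m ∈ Finset.Ico N M₁, lam₁ m • v m
            + s • ∑ m ∈ Finset.Ico N M₂, lam₂ m • v m := by
            rw [hsub M₁ lam₁ (le_max_left _ _), hsub M₂ lam₂ (le_max_right _ _)]
  have hyK : y ∈ closure K := by
    by_contra hy
    obtain ⟨φ, u, hfu, hu⟩ :=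
      geometric_hahn_banach_closed_point (hconv.closure) isClosed_closure hy
    have h0u : (0:ℝ) < u := by
      have := hfu 0 (subset_closure hzero)
      simpa using this
    have hφ : φ ≠ 0 := by
      intro h
      rw [h] at hu
      simp at hu
      linarith
    have hdiv := tendsto_posparts a hcc hind hφ N
    obtain ⟨M, hM⟩ := (hdiv.eventually (eventually_gt_atTop u)).exists
    set lam : ℕ → ℝ := fun m => if 0 < φ (v m) then 1 else 0 with hlam
    have hzK : (∑ m ∈ Finset.Ico N M, lam m • v m) ∈ K := by
      refine ⟨M, lam, fun m => ?_, rfl⟩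
      by_cases hm : 0 < φ (v m) <;> constructor <;> simp [hlam, hm]
    have : φ (∑ m ∈ Finset.Ico N M, lam m • v m)
        = ∑ m ∈ Finset.Ico N M, max (φ (v m)) 0 := by
      rw [map_sum]
      apply Finset.sum_congr rfl
      intro m _
      rw [map_smul, smul_eq_mul]
      by_cases hm : 0 < φ (v m)
      · simp [hlam, hm, max_eq_left hm.le]
      · simp [hlam, hm, max_eq_right (le_of_not_gt hm)]
    have h1 := hfu _ (subset_closure hzK)
    rw [this] at h1
    linarith
  rw [Metric.mem_closure_iff] at hyK
  obtain ⟨z, hzK, hdz⟩ := hyK η hη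
  obtain ⟨M, lam, hlam, rfl⟩ := hzK
  refine ⟨M, lam, hlam, ?_⟩
  rw [← dist_eq_norm]
  rw [dist_comm]
  exact hdz


lemma rounding (e : ℕ) (v : ℕ → EuclideanSpace ℝ (Fin e)) {θ : ℝ} (hθ : 0 ≤ θ) :
    ∀ (k : ℕ) (T : Finset ℕ) (lam : ℕ → ℝ),
      (∀ m ∈ T, 0 ≤ lam m ∧ lam m ≤ 1) → (∀ m ∈ T, ‖v m‖ ≤ θ) →
      (T.filter (fun m => lam m ≠ 0 ∧ lam m ≠ 1)).card ≤ k →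
      ∃ S ⊆ T, ‖(∑ m ∈ S, v m) - ∑ m ∈ T, lam m • v m‖ ≤ e * θ := by
  classical
  have base : ∀ (T : Finset ℕ) (lam : ℕ → ℝ),
      (∀ m ∈ T, 0 ≤ lam m ∧ lam m ≤ 1) → (∀ m ∈ T, ‖v m‖ ≤ θ) →
      (T.filter (fun m => lam m ≠ 0 ∧ lam m ≠ 1)).card ≤ e →
      ∃ S ⊆ T, ‖(∑ m ∈ S, v m) - ∑ m ∈ T, lam m • v m‖ ≤ e * θ := by
    intro T lam hb hn hc
    set Tf := T.filter (fun m => lam m ≠ 0 ∧ lam m ≠ 1) with hTf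
    set S := T.filter (fun m => lam m = 1) with hS
    refine ⟨S, Finset.filter_subset _ _, ?_⟩
    have hTsplit : ∑ m ∈ T, lam m • v m = (∑ m ∈ S, v m) + ∑ m ∈ Tf, lam m • v m := by
      rw [← Finset.sum_filter_add_sum_filter_not T (fun m => lam m = 1) (fun m => lam m • v m)]
      congr 1
      · apply Finset.sum_congr rfl
        intro m hm
        rw [(Finset.mem_filter.mp hm).2, one_smul]
      · symm
        apply Finset.sum_subset
        · intro m hm
          rw [Finset.mem_filter] at hm ⊢
          exact ⟨hm.1, hm.2.2⟩
        · intro m hm hm'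
          rw [Finset.mem_filter] at hm hm'
          push_neg at hm'
          by_cases h0 : lam m = 0
          · rw [h0, zero_smul]
          · exact absurd (hm' hm.1 h0) hm.2
    rw [hTsplit]
    have : (∑ m ∈ S, v m) - ((∑ m ∈ S, v m) + ∑ m ∈ Tf, lam m • v m)
        = -(∑ m ∈ Tf, lam m • v m) := by abel
    rw [this, norm_neg]
    calc ‖∑ m ∈ Tf, lam m • v m‖ ≤ ∑ m ∈ Tf, ‖lam m • v m‖ := norm_sum_le _ _
      _ ≤ ∑ _m ∈ Tf, θ := by
          apply Finset.sum_le_sum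
          intro m hm
          have hmT : m ∈ T := Finset.mem_of_mem_filter _ hm
          rw [norm_smul, Real.norm_eq_abs, abs_of_nonneg (hb m hmT).1]
          calc lam m * ‖v m‖ ≤ 1 * θ :=
              mul_le_mul (hb m hmT).2 (hn m hmT) (norm_nonneg _) zero_le_one
            _ = θ := one_mul θ
      _ = Tf.card * θ := by rw [Finset.sum_const, nsmul_eq_mul]
      _ ≤ e * θ := by
          apply mul_le_mul_of_nonneg_right _ hθ
          exact_mod_cast hc
  intro k
  induction k with
  | zero =>
    intro T lam hb hn hc
    exact base T lam hb hn (le_trans hc (Nat.zero_le e))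
  | succ k ih =>
    intro T lam hb hn hc
    by_cases hce : (T.filter (fun m => lam m ≠ 0 ∧ lam m ≠ 1)).card ≤ e
    · exact base T lam hb hn hce
    · set Tf := T.filter (fun m => lam m ≠ 0 ∧ lam m ≠ 1) with hTf
      have hTfT : Tf ⊆ T := Finset.filter_subset _ _
      have hfrac : ∀ m ∈ Tf, 0 < lam m ∧ lam m < 1 := by
        intro m hm
        rw [hTf, Finset.mem_filter] at hm
        obtain ⟨hmT, h0, h1⟩ := hm
        exact ⟨lt_of_le_of_ne (hb m hmT).1 (Ne.symm h0), lt_of_le_of_ne (hb m hmT).2 h1⟩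
      have hnli : ¬ LinearIndependent ℝ (fun m : {x // x ∈ Tf} => v ↑m) := by
        intro hli
        have h1 := hli.fintype_card_le_finrank
        rw [finrank_euclideanSpace_fin, Fintype.card_coe] at h1
        omega
      obtain ⟨gg, hgsum, i₀, hgi₀⟩ := Fintype.not_linearIndependent_iff.mp hnli
      set μ : ℕ → ℝ := fun m => if h : m ∈ Tf then gg ⟨m, h⟩ else 0 with hμ
      have hμ0 : ∀ m, m ∉ Tf → μ m = 0 := fun m hm => dif_neg hm
      have hμsum : ∑ m ∈ Tf, μ m • v m = 0 := by
        rw [← hgsum, ← Finset.sum_attach Tf (fun m => μ m • v m), Finset.univ_eq_attach]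
        apply Finset.sum_congr rfl
        intro i _
        simp [hμ, i.2]
      set Tμ := Tf.filter (fun m => μ m ≠ 0) with hTμ
      have hTμne : Tμ.Nonempty := by
        refine ⟨(i₀ : ℕ), ?_⟩
        rw [hTμ, Finset.mem_filter]
        refine ⟨i₀.2, ?_⟩
        simpa [hμ, i₀.2] using hgi₀
      set r : ℕ → ℝ := fun m => if 0 < μ m then (1 - lam m)/(μ m) else lam m/(-(μ m)) with hr
      have hrpos : ∀ m ∈ Tμ, 0 < r m := by
        intro m hm
        rw [hTμ, Finset.mem_filter] at hm
        obtain ⟨hmTf, hμm⟩ := hm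
        obtain ⟨hl0, hl1⟩ := hfrac m hmTf
        simp only [hr]
        by_cases hp : 0 < μ m
        · rw [if_pos hp]; exact div_pos (by linarith) hp
        · rw [if_neg hp]
          have : μ m < 0 := lt_of_le_of_ne (le_of_not_gt hp) hμm
          exact div_pos hl0 (by linarith)
      have himgne : (Tμ.image r).Nonempty := hTμne.image r
      set tstar := (Tμ.image r).min' himgne with htstar
      obtain ⟨mstar, hmstar, hms⟩ := Finset.mem_image.mp ((Tμ.image r).min'_mem himgne)
      have htpos : 0 < tstar := by
        rw [htstar, ← hms]; exact hrpos mstar hmstar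
      have htle : ∀ m ∈ Tμ, tstar ≤ r m := fun m hm =>
        Finset.min'_le _ _ (Finset.mem_image_of_mem r hm)
      set lam' : ℕ → ℝ := fun m => lam m + tstar * μ m with hlam'
      have hlam'eq : ∀ m, μ m = 0 → lam' m = lam m := by
        intro m hm; simp only [hlam', hm, mul_zero, add_zero]
      have hmstarTf : mstar ∈ Tf := (Finset.mem_filter.mp hmstar).1
      have hμmstar : μ mstar ≠ 0 := (Finset.mem_filter.mp hmstar).2
      have hts : tstar = r mstar := by rw [htstar, ← hms]
      have hstar01 : lam' mstar = 1 ∨ lam' mstar = 0 := by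
        simp only [hlam', hts, hr]
        by_cases hp : 0 < μ mstar
        · left; rw [if_pos hp]; field_simp; ring
        · right; rw [if_neg hp]
          field_simp
          ring
      have hbounds' : ∀ m ∈ T, 0 ≤ lam' m ∧ lam' m ≤ 1 := by
        intro m hmT
        by_cases hmTμ : m ∈ Tμ
        · have hmTf : m ∈ Tf := (Finset.mem_filter.mp hmTμ).1
          have hμm : μ m ≠ 0 := (Finset.mem_filter.mp hmTμ).2
          obtain ⟨hl0, hl1⟩ := hfrac m hmTf
          have hlt := htle m hmTμ
          simp only [hlam']
          by_cases hp : 0 < μ m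
          · constructor
            · have : 0 ≤ tstar * μ m := le_of_lt (mul_pos htpos hp)
              linarith
            · have h2 : tstar * μ m ≤ r m * μ m :=
                mul_le_mul_of_nonneg_right hlt (le_of_lt hp)
              simp only [hr] at h2
              rw [if_pos hp, div_mul_cancel₀ _ (ne_of_gt hp)] at h2
              linarith
          · have hneg : μ m < 0 := lt_of_le_of_ne (le_of_not_gt hp) hμm
            constructor
            · have h2 : r m * μ m ≤ tstar * μ m :=
                mul_le_mul_of_nonpos_right hlt (le_of_lt hneg)
              simp only [hr] at h2
              rw [if_neg hp] at h2
              have h3 : lam m / (-(μ m)) * μ m = -lam m := by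
                field_simp
              rw [h3] at h2
              linarith
            · have : tstar * μ m < 0 := mul_neg_of_pos_of_neg htpos hneg
              linarith
        · have hμm : μ m = 0 := by
            by_cases hmTf : m ∈ Tf
            · by_contra hc'
              exact hmTμ (Finset.mem_filter.mpr ⟨hmTf, hc'⟩)
            · exact hμ0 m hmTf
          rw [hlam'eq m hμm]
          exact hb m hmT
      have hsum' : ∑ m ∈ T, lam' m • v m = ∑ m ∈ T, lam m • v m := by
        have hTμ0 : ∑ m ∈ T, μ m • v m = 0 := by
          rw [← Finset.sum_subset hTfT (fun m _ hm => by rw [hμ0 m hm, zero_smul])]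
          exact hμsum
        calc ∑ m ∈ T, lam' m • v m
            = ∑ m ∈ T, (lam m • v m + tstar • (μ m • v m)) := by
              apply Finset.sum_congr rfl
              intro m _
              rw [hlam', add_smul, smul_smul]
          _ = ∑ m ∈ T, lam m • v m + tstar • ∑ m ∈ T, μ m • v m := by
              rw [Finset.sum_add_distrib, Finset.smul_sum]
          _ = ∑ m ∈ T, lam m • v m := by rw [hTμ0, smul_zero, add_zero]
      have hsubset : T.filter (fun m => lam' m ≠ 0 ∧ lam' m ≠ 1) ⊆ Tf.erase mstar := by
        intro m hm
        rw [Finset.mem_filter] at hm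
        obtain ⟨hmT, h0', h1'⟩ := hm
        have hmTf : m ∈ Tf := by
          by_contra hmTf
          have : lam' m = lam m := hlam'eq m (hμ0 m hmTf)
          rw [hTf, Finset.mem_filter] at hmTf
          push_neg at hmTf
          by_cases hz : lam m = 0
          · exact h0' (by rw [this, hz])
          · exact h1' (by rw [this, hmTf hmT hz])
        refine Finset.mem_erase.mpr ⟨?_, hmTf⟩
        intro hc'
        subst hc'
        rcases hstar01 with h | h
        · exact h1' h
        · exact h0' h
      have hcard' : (T.filter (fun m => lam' m ≠ 0 ∧ lam' m ≠ 1)).card ≤ k := by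
        have h1 := Finset.card_le_card hsubset
        rw [Finset.card_erase_of_mem hmstarTf] at h1
        omega
      obtain ⟨S, hST, hSnorm⟩ := ih T lam' hbounds' hn hcard'
      rw [hsum'] at hSnorm
      exact ⟨S, hST, hSnorm⟩

lemma subsetsum_dense (a : ℕ → ℕ → ℝ) (hcc : ∀ i, CondConv (a i))
    (hind : ∀ c : ℕ → ℝ, (Function.support c).Finite →
      (Summable fun n => |∑ᶠ i, c i * a i n|) → c = 0)
    (e N : ℕ) (y : EuclideanSpace ℝ (Fin e)) {η : ℝ} (hη : 0 < η) :
    ∃ S : Finset ℕ, (∀ m ∈ S, N ≤ m) ∧ ‖(∑ m ∈ S, avec a e m) - y‖ < η := by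
  classical
  set θ : ℝ := η / (4 * (e + 1)) with hθdef
  have hθpos : 0 < θ := by positivity
  obtain ⟨N₁', hN₁⟩ := eventually_avec_small a hcc e hθpos
  set N₁ := max N₁' N with hN₁def
  obtain ⟨M, lam, hlam, happ⟩ := zonotope_dense a (fun i => (hcc i).1) hind e N₁ y
    (show (0:ℝ) < η/4 by linarith)
  obtain ⟨S, hST, hSnorm⟩ := rounding e (avec a e) (le_of_lt hθpos)
    (((Finset.Ico N₁ M).filter (fun m => lam m ≠ 0 ∧ lam m ≠ 1)).card)
    (Finset.Ico N₁ M) lam (fun m _ => hlam m)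
    (fun m hm => le_of_lt (hN₁ m (le_trans (le_max_left _ _) (Finset.mem_Ico.mp hm).1)))
    le_rfl
  refine ⟨S, ?_, ?_⟩
  · intro m hm
    exact le_trans (le_max_right _ _) (Finset.mem_Ico.mp (hST hm)).1
  · have heθ : (e : ℝ) * θ ≤ η / 4 := by
      have he : (0:ℝ) ≤ e := Nat.cast_nonneg e
      have h1 : (0:ℝ) < 4 * ((e:ℝ) + 1) := by positivity
      rw [hθdef, mul_div_assoc', div_le_div_iff₀ h1 (by norm_num)]
      nlinarith
    calc ‖(∑ m ∈ S, avec a e m) - y‖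
        ≤ ‖(∑ m ∈ S, avec a e m) - ∑ m ∈ Finset.Ico N₁ M, lam m • avec a e m‖
          + ‖(∑ m ∈ Finset.Ico N₁ M, lam m • avec a e m) - y‖ := by
          have := norm_sub_le_norm_sub_add_norm_sub (∑ m ∈ S, avec a e m)
            (∑ m ∈ Finset.Ico N₁ M, lam m • avec a e m) y
          exact this
      _ < η / 4 + η / 4 + η / 2 := by
          have h1 : ‖(∑ m ∈ S, avec a e m) - ∑ m ∈ Finset.Ico N₁ M, lam m • avec a e m‖
              ≤ η / 4 := le_trans hSnorm heθ
          linarith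
      _ = η := by ring

lemma exists_good_enum (d : ℕ) (Cd : ℝ) (hCd : 0 < Cd) (hpc : PolyConf d Cd)
    (v : ℕ → EuclideanSpace ℝ (Fin d)) (NewF : Finset ℕ) {c : ℝ} (hc : 0 < c)
    (hv : ∀ m ∈ NewF, ‖v m‖ < c / Cd) :
    ∃ h : ℕ → ℕ, Set.InjOn h (Set.Iio (NewF.card : ℕ)) ∧
      (Finset.range NewF.card).image h = NewF ∧
      (∀ t < NewF.card, h t ∈ NewF) ∧
      ∀ j ≤ NewF.card, ‖∑ t ∈ Finset.range j, v (h t)‖ ≤ c + ‖∑ m ∈ NewF, v m‖ := by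
  classical
  set N := NewF.card with hN
  set Td := ∑ m ∈ NewF, v m with hTd
  -- enumeration of NewF
  set ι₀ : Fin N ≃o {m // m ∈ NewF} := NewF.orderIsoOfFin rfl with hι₀
  set vl : ℕ → ℕ := fun i => if h : i < N then (ι₀ ⟨i, h⟩ : ℕ) else 0 with hvl
  have hvl_mem : ∀ i, i < N → vl i ∈ NewF := by
    intro i hi
    simp only [hvl, dif_pos hi]
    exact (ι₀ ⟨i, hi⟩).2
  have hvl_inj : ∀ i, i < N → ∀ j, j < N → vl i = vl j → i = j := by
    intro i hi j hj hij
    simp only [hvl, dif_pos hi, dif_pos hj] at hij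
    have := ι₀.injective (Subtype.coe_injective hij)
    exact congrArg Fin.val this
  have hvl_img : (Finset.range N).image vl = NewF := by
    ext m
    simp only [Finset.mem_image, Finset.mem_range]
    constructor
    · rintro ⟨i, hi, rfl⟩; exact hvl_mem i hi
    · intro hm
      refine ⟨(ι₀.symm ⟨m, hm⟩ : Fin N), (ι₀.symm ⟨m, hm⟩).isLt, ?_⟩
      simp only [hvl, dif_pos (ι₀.symm ⟨m, hm⟩).isLt]
      rw [Fin.eta, ι₀.apply_symm_apply]
  -- R and u
  set R : ℕ := max 1 ⌈‖Td‖ * Cd / c⌉₊ with hR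
  have hR1 : 1 ≤ R := le_max_left _ _
  have hRpos : (0:ℝ) < R := by exact_mod_cast Nat.lt_of_lt_of_le Nat.zero_lt_one hR1
  have hRne : (R:ℝ) ≠ 0 := ne_of_gt hRpos
  have hRge : ‖Td‖ * Cd / c ≤ R := by
    calc ‖Td‖ * Cd / c ≤ (⌈‖Td‖ * Cd / c⌉₊ : ℝ) := Nat.le_ceil _
      _ ≤ R := by exact_mod_cast le_max_right _ _
  set u : EuclideanSpace ℝ (Fin d) := -((R:ℝ)⁻¹ • Td) with hu
  have hu_norm : ‖u‖ = ‖Td‖ / R := by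
    rw [hu, norm_neg, norm_smul, norm_inv, Real.norm_natCast, inv_mul_eq_div]
  have hu_le : ‖u‖ ≤ c / Cd := by
    rw [hu_norm, div_le_div_iff₀ hRpos hCd]
    rw [div_le_iff₀ hc] at hRge
    linarith
  set ntot := R + N with hntot
  have hntot_pos : 0 < ntot := by omega
  set w : ℕ → EuclideanSpace ℝ (Fin d) := fun p => if p < R then u else v (vl (p - R))
    with hw
  have hw_of_lt : ∀ p, p < R → w p = u := fun p hp => by simp only [hw, if_pos hp]
  have hw_of_ge : ∀ p, R ≤ p → w p = v (vl (p - R)) := fun p hp => by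
    simp only [hw, if_neg (not_lt.mpr hp)]
  have hsum_new : ∑ i ∈ Finset.range N, v (vl i) = Td := by
    rw [hTd, ← hvl_img, Finset.sum_image ?_]
    intro x hx y hy
    exact hvl_inj x (Finset.mem_range.mp hx) y (Finset.mem_range.mp hy)
  have hwsum : ∑ p ∈ Finset.range ntot, w p = 0 := by
    have hsplit : ∑ p ∈ Finset.range ntot, w p
        = ∑ p ∈ Finset.Ico 0 R, w p + ∑ p ∈ Finset.Ico R ntot, w p := by
      rw [Finset.range_eq_Ico]
      exact (Finset.sum_Ico_consecutive w (Nat.zero_le R) (show R ≤ ntot by omega)).symm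
    have h1 : ∑ p ∈ Finset.Ico 0 R, w p = R • u := by
      rw [← Finset.range_eq_Ico]
      rw [Finset.sum_congr rfl (fun p hp => hw_of_lt p (Finset.mem_range.mp hp))]
      rw [Finset.sum_const, Finset.card_range]
    have h2 : ∑ p ∈ Finset.Ico R ntot, w p = Td := by
      rw [Finset.sum_Ico_eq_sum_range]
      have : ∀ i ∈ Finset.range (ntot - R), w (R + i) = v (vl i) := by
        intro i hi
        rw [hw_of_ge (R + i) (Nat.le_add_right _ _)]
        have hri : R + i - R = i := by omega
        rw [hri]
      rw [Finset.sum_congr rfl this]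
      have : ntot - R = N := by omega
      rw [this, hsum_new]
    rw [hsplit, h1, h2, ← Nat.cast_smul_eq_nsmul ℝ, hu, smul_neg, smul_smul,
      mul_inv_cancel₀ hRne, one_smul, neg_add_cancel]
  set w' : ℕ → EuclideanSpace ℝ (Fin d) := fun p => (Cd / c) • w p with hw'
  have hdivpos : 0 < Cd / c := div_pos hCd hc
  have hw'sum : ∑ p ∈ Finset.range ntot, w' p = 0 := by
    simp only [hw']
    rw [← Finset.smul_sum, hwsum, smul_zero]
  have hw'norm : ∀ p, p < ntot → ‖w' p‖ ≤ 1 := by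
    intro p hp
    have hbound : ‖w p‖ ≤ c / Cd := by
      by_cases hpR : p < R
      · rw [hw_of_lt p hpR]; exact hu_le
      · rw [hw_of_ge p (not_lt.mp hpR)]
        exact le_of_lt (hv _ (hvl_mem (p - R) (by omega)))
    simp only [hw']
    rw [norm_smul, Real.norm_eq_abs, abs_of_pos hdivpos]
    calc Cd / c * ‖w p‖ ≤ Cd / c * (c / Cd) :=
        mul_le_mul_of_nonneg_left hbound (le_of_lt hdivpos)
      _ = 1 := by field_simp
  obtain ⟨q, hq, hconf⟩ := hpc ntot hntot_pos w' hw'sum hw'norm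
  have hconf' : ∀ j, j ≤ ntot → ‖w 0 + ∑ k ∈ Finset.Ico 1 j, w (q k)‖ ≤ c := by
    intro j hj
    have h1 := hconf j hj
    have heq : w' 0 + ∑ k ∈ Finset.Ico 1 j, w' (q k)
        = (Cd / c) • (w 0 + ∑ k ∈ Finset.Ico 1 j, w (q k)) := by
      simp only [hw']
      rw [smul_add, Finset.smul_sum]
    rw [heq, norm_smul, Real.norm_eq_abs, abs_of_pos hdivpos] at h1
    have h3 : ‖w 0 + ∑ k ∈ Finset.Ico 1 j, w (q k)‖ ≤ Cd / (Cd / c) :=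
      (le_div_iff₀' hdivpos).mpr h1
    have h4 : Cd / (Cd / c) = c := by field_simp
    rwa [h4] at h3
  set σ : ℕ → ℕ := fun p => if p = 0 then 0 else q p with hσ
  have hq_mem : ∀ p, 1 ≤ p → p < ntot → 1 ≤ q p ∧ q p < ntot := by
    intro p h1 h2
    have := hq.1 (Set.mem_Ico.mpr ⟨h1, h2⟩)
    exact Set.mem_Ico.mp this
  have hσ_lt : ∀ p, p < ntot → σ p < ntot := by
    intro p hp
    by_cases hp0 : p = 0
    · simp only [hσ, if_pos hp0]; omega
    · simp only [hσ, if_neg hp0]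
      exact (hq_mem p (by omega) hp).2
  have hσ_inj : ∀ p₁, p₁ < ntot → ∀ p₂, p₂ < ntot → σ p₁ = σ p₂ → p₁ = p₂ := by
    intro p₁ h₁ p₂ h₂ he
    by_cases hz₁ : p₁ = 0 <;> by_cases hz₂ : p₂ = 0
    · omega
    · exfalso
      simp only [hσ, if_pos hz₁, if_neg hz₂] at he
      have := (hq_mem p₂ (by omega) h₂).1
      omega
    · exfalso
      simp only [hσ, if_neg hz₁, if_pos hz₂] at he
      have := (hq_mem p₁ (by omega) h₁).1
      omega
    · simp only [hσ, if_neg hz₁, if_neg hz₂] at he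
      exact hq.2.1 (Set.mem_Ico.mpr ⟨by omega, h₁⟩) (Set.mem_Ico.mpr ⟨by omega, h₂⟩) he
  have hσ_surj : ∀ t, t < ntot → ∃ p, p < ntot ∧ σ p = t := by
    intro t ht
    by_cases ht0 : t = 0
    · exact ⟨0, hntot_pos, by simp [hσ, ht0]⟩
    · obtain ⟨p, hp, hpt⟩ := hq.2.2 (Set.mem_Ico.mpr ⟨by omega, ht⟩)
      rw [Set.mem_Ico] at hp
      refine ⟨p, hp.2, ?_⟩
      simp only [hσ, if_neg (by omega : p ≠ 0)]
      exact hpt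
  have hconfσ : ∀ j, j ≤ ntot → ‖∑ p ∈ Finset.range j, w (σ p)‖ ≤ c := by
    intro j hj
    by_cases hj0 : j = 0
    · subst hj0; simp; linarith
    · have h0j : 0 < j := by omega
      rw [Finset.range_eq_Ico, Finset.sum_eq_sum_Ico_succ_bot h0j]
      have hσ0 : σ 0 = 0 := by simp [hσ]
      have : ∑ p ∈ Finset.Ico 1 j, w (σ p) = ∑ p ∈ Finset.Ico 1 j, w (q p) := by
        apply Finset.sum_congr rfl
        intro p hp
        have : p ≠ 0 := by
          have := (Finset.mem_Ico.mp hp).1; omega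
        simp [hσ, this]
      rw [hσ0, this]
      exact hconf' j hj
  -- the set of "real" positions
  set P : Finset ℕ := (Finset.range ntot).filter (fun p => R ≤ σ p) with hP
  have hP_sub : ∀ p ∈ P, p < ntot := by
    intro p hp
    exact Finset.mem_range.mp (Finset.mem_of_mem_filter _ hp)
  have hP_ge : ∀ p ∈ P, R ≤ σ p := fun p hp => (Finset.mem_filter.mp hp).2
  have hσ_injP : Set.InjOn σ ↑P := by
    intro p₁ h₁ p₂ h₂ he
    exact hσ_inj p₁ (hP_sub p₁ h₁) p₂ (hP_sub p₂ h₂) he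
  have hPimg : P.image σ = Finset.Ico R ntot := by
    ext t
    simp only [Finset.mem_image, Finset.mem_Ico]
    constructor
    · rintro ⟨p, hp, rfl⟩
      exact ⟨hP_ge p hp, hσ_lt p (hP_sub p hp)⟩
    · rintro ⟨h1, h2⟩
      obtain ⟨p, hp, hpt⟩ := hσ_surj t h2
      refine ⟨p, ?_, hpt⟩
      rw [hP, Finset.mem_filter, Finset.mem_range]
      exact ⟨hp, by omega⟩
  have hPcard : P.card = N := by
    have := Finset.card_image_of_injOn hσ_injP
    rw [hPimg, Nat.card_Ico] at this
    omega
  set ι : Fin N ≃o {p // p ∈ P} := P.orderIsoOfFin hPcard with hι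
  set ιn : ℕ → ℕ := fun t => if h : t < N then (ι ⟨t, h⟩ : ℕ) else ntot with hιn
  have hιn_mem : ∀ t, t < N → ιn t ∈ P := by
    intro t ht
    simp only [hιn, dif_pos ht]
    exact (ι ⟨t, ht⟩).2
  have hιn_inj : ∀ t₁, t₁ < N → ∀ t₂, t₂ < N → ιn t₁ = ιn t₂ → t₁ = t₂ := by
    intro t₁ h₁ t₂ h₂ he
    simp only [hιn, dif_pos h₁, dif_pos h₂] at he
    exact congrArg Fin.val (ι.injective (Subtype.coe_injective he))
  set bj : ℕ → ℕ := fun j => if j < N then ιn j else ntot with hbj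
  have hbj_le : ∀ j, bj j ≤ ntot := by
    intro j
    simp only [hbj]
    split
    · exact le_of_lt (hP_sub _ (hιn_mem j ‹j < N›))
    · exact le_rfl
  have hIm : ∀ j, j ≤ N → (Finset.range j).image ιn = P.filter (fun p => p < bj j) := by
    intro j hj
    ext p
    simp only [Finset.mem_image, Finset.mem_range, Finset.mem_filter]
    constructor
    · rintro ⟨t, ht, rfl⟩
      have htN : t < N := by omega
      refine ⟨hιn_mem t htN, ?_⟩
      simp only [hbj]
      split
      · rename_i hjN
        simp only [hιn, dif_pos htN, dif_pos hjN]
        rw [Subtype.coe_lt_coe, ι.lt_iff_lt]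
        exact ht
      · exact hP_sub _ (hιn_mem t htN)
    · rintro ⟨hpP, hplt⟩
      set s : Fin N := ι.symm ⟨p, hpP⟩ with hs
      refine ⟨(s : ℕ), ?_, ?_⟩
      · by_cases hjN : j < N
        · have : p < ιn j := by
            simpa only [hbj, if_pos hjN] using hplt
          simp only [hιn, dif_pos hjN] at this
          have h2 : (⟨p, hpP⟩ : {p // p ∈ P}) < ι ⟨j, hjN⟩ := Subtype.coe_lt_coe.mp this
          have h3 : ι s < ι ⟨j, hjN⟩ := by
            rw [hs, ι.apply_symm_apply]
            exact h2
          have h4 := ι.lt_iff_lt.mp h3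
          exact h4
        · have : j = N := by omega
          subst this
          exact s.isLt
      · simp only [hιn, dif_pos s.isLt]
        rw [Fin.eta, hs, ι.apply_symm_apply]
  -- the composite map
  set cmp : ℕ → ℕ := fun t => σ (ιn t) - R with hcmp
  have hcmp_lt : ∀ t, t < N → cmp t < N := by
    intro t ht
    have h1 := hP_ge _ (hιn_mem t ht)
    have h2 := hσ_lt _ (hP_sub _ (hιn_mem t ht))
    simp only [hcmp]
    omega
  have hcmp_inj : ∀ t₁, t₁ < N → ∀ t₂, t₂ < N → cmp t₁ = cmp t₂ → t₁ = t₂ := by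
    intro t₁ h₁ t₂ h₂ he
    simp only [hcmp] at he
    have hg₁ := hP_ge _ (hιn_mem t₁ h₁)
    have hg₂ := hP_ge _ (hιn_mem t₂ h₂)
    have he' : σ (ιn t₁) = σ (ιn t₂) := by omega
    exact hιn_inj t₁ h₁ t₂ h₂
      (hσ_inj _ (hP_sub _ (hιn_mem t₁ h₁)) _ (hP_sub _ (hιn_mem t₂ h₂)) he')
  have hrangeN_img : (Finset.range N).image ιn = P := by
    rw [hIm N le_rfl]
    apply Finset.filter_true_of_mem
    intro p hp
    simp only [hbj, if_neg (lt_irrefl N)]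
    exact hP_sub p hp
  have hcmp_img : (Finset.range N).image cmp = Finset.range N := by
    have h1 : (Finset.range N).image cmp
        = ((Finset.range N).image ιn).image (fun p => σ p - R) := by
      rw [Finset.image_image]
      rfl
    rw [h1, hrangeN_img]
    have h2 : P.image (fun p => σ p - R) = (P.image σ).image (fun t => t - R) := by
      rw [Finset.image_image]
      rfl
    rw [h2, hPimg]
    ext i
    simp only [Finset.mem_image, Finset.mem_Ico, Finset.mem_range]
    constructor
    · rintro ⟨t, ⟨ht1, ht2⟩, rfl⟩
      omega
    · intro hi
      exact ⟨R + i, by omega, by omega⟩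
  -- the enumeration
  refine ⟨fun t => vl (cmp t), ?_, ?_, ?_, ?_⟩
  · intro t₁ h₁ t₂ h₂ he
    simp only [Set.mem_Iio] at h₁ h₂
    exact hcmp_inj t₁ h₁ t₂ h₂
      (hvl_inj _ (hcmp_lt t₁ h₁) _ (hcmp_lt t₂ h₂) he)
  · have : (Finset.range N).image (fun t => vl (cmp t))
        = ((Finset.range N).image cmp).image vl := by
      rw [Finset.image_image]
      rfl
    rw [this, hcmp_img, hvl_img]
  · intro t ht
    exact hvl_mem _ (hcmp_lt t ht)
  · intro j hj
    have hterm : ∀ t ∈ Finset.range j, v (vl (cmp t)) = w (σ (ιn t)) := by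
      intro t ht
      have htN : t < N := by
        have := Finset.mem_range.mp ht; omega
      rw [hw_of_ge _ (hP_ge _ (hιn_mem t htN))]
    rw [Finset.sum_congr rfl hterm]
    have hstep : ∑ t ∈ Finset.range j, w (σ (ιn t))
        = ∑ p ∈ P.filter (fun p => p < bj j), w (σ p) := by
      rw [← hIm j hj]
      rw [Finset.sum_image ?_]
      intro t₁ h₁ t₂ h₂
      exact hιn_inj t₁ (by have := Finset.mem_range.mp h₁; omega)
        t₂ (by have := Finset.mem_range.mp h₂; omega)
    rw [hstep]
    -- split range (bj j) into P-part and non-P-part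
    have hsplit' : P.filter (fun p => p < bj j) = (Finset.range (bj j)).filter (fun p => p ∈ P) := by
      ext p
      simp only [Finset.mem_filter, Finset.mem_range]
      constructor
      · rintro ⟨h1, h2⟩; exact ⟨h2, h1⟩
      · rintro ⟨h1, h2⟩; exact ⟨h2, h1⟩
    have htotal := Finset.sum_filter_add_sum_filter_not (Finset.range (bj j))
      (fun p => p ∈ P) (fun p => w (σ p))
    have hA : ‖∑ p ∈ Finset.range (bj j), w (σ p)‖ ≤ c := hconfσ (bj j) (hbj_le j)
    have hBval : ∀ p ∈ (Finset.range (bj j)).filter (fun p => ¬ p ∈ P), w (σ p) = u := by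
      intro p hp
      rw [Finset.mem_filter, Finset.mem_range] at hp
      obtain ⟨h1, h2⟩ := hp
      have hplt : p < ntot := lt_of_lt_of_le h1 (hbj_le j)
      have : ¬ R ≤ σ p := by
        intro hc'
        exact h2 (Finset.mem_filter.mpr ⟨Finset.mem_range.mpr hplt, hc'⟩)
      exact hw_of_lt _ (by omega)
    have hBcard : ((Finset.range (bj j)).filter (fun p => ¬ p ∈ P)).card ≤ R := by
      set Q := (Finset.range (bj j)).filter (fun p => ¬ p ∈ P) with hQ
      have hQsub : ∀ p ∈ Q, p < ntot := by
        intro p hp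
        rw [hQ, Finset.mem_filter, Finset.mem_range] at hp
        exact lt_of_lt_of_le hp.1 (hbj_le j)
      have hQinj : Set.InjOn σ ↑Q := by
        intro p₁ h₁ p₂ h₂ he
        exact hσ_inj p₁ (hQsub p₁ h₁) p₂ (hQsub p₂ h₂) he
      have himg_sub : Q.image σ ⊆ Finset.range R := by
        intro t ht
        obtain ⟨p, hp, rfl⟩ := Finset.mem_image.mp ht
        have hplt := hQsub p hp
        rw [hQ, Finset.mem_filter, Finset.mem_range] at hp
        have : ¬ R ≤ σ p := by
          intro hc'
          exact hp.2 (Finset.mem_filter.mpr ⟨Finset.mem_range.mpr hplt, hc'⟩)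
        rw [Finset.mem_range]
        omega
      calc Q.card = (Q.image σ).card := (Finset.card_image_of_injOn hQinj).symm
        _ ≤ (Finset.range R).card := Finset.card_le_card himg_sub
        _ = R := Finset.card_range R
    have hB : ‖∑ p ∈ (Finset.range (bj j)).filter (fun p => ¬ p ∈ P), w (σ p)‖ ≤ ‖Td‖ := by
      rw [Finset.sum_congr rfl hBval, Finset.sum_const]
      rw [← Nat.cast_smul_eq_nsmul ℝ, norm_smul, Real.norm_natCast]
      calc (((Finset.range (bj j)).filter (fun p => ¬ p ∈ P)).card : ℝ) * ‖u‖
          ≤ (R : ℝ) * ‖u‖ := by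
            apply mul_le_mul_of_nonneg_right _ (norm_nonneg u)
            exact_mod_cast hBcard
        _ = ‖Td‖ := by
            rw [hu_norm, mul_div_cancel₀ _ hRne]
    have heq2 : ∑ p ∈ (Finset.range (bj j)).filter (fun p => p ∈ P), w (σ p)
        = (∑ p ∈ Finset.range (bj j), w (σ p))
          - ∑ p ∈ (Finset.range (bj j)).filter (fun p => ¬ p ∈ P), w (σ p) := by
      rw [← htotal]
      abel
    rw [hsplit', heq2]
    calc ‖(∑ p ∈ Finset.range (bj j), w (σ p))
          - ∑ p ∈ (Finset.range (bj j)).filter (fun p => ¬ p ∈ P), w (σ p)‖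
        ≤ ‖∑ p ∈ Finset.range (bj j), w (σ p)‖
          + ‖∑ p ∈ (Finset.range (bj j)).filter (fun p => ¬ p ∈ P), w (σ p)‖ :=
          norm_sub_le _ _
      _ ≤ c + ‖Td‖ := add_le_add hA hB

def projL (d : ℕ) : EuclideanSpace ℝ (Fin (d+1)) →ₗ[ℝ] EuclideanSpace ℝ (Fin d) where
  toFun w := WithLp.toLp 2 (fun i : Fin d => w i.castSucc)
  map_add' u v := rfl
  map_smul' c u := rfl

lemma projL_norm (d : ℕ) (w : EuclideanSpace ℝ (Fin (d+1))) : ‖projL d w‖ ≤ ‖w‖ := by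
  rw [EuclideanSpace.norm_eq, EuclideanSpace.norm_eq]
  apply Real.sqrt_le_sqrt
  have h1 : ∑ i : Fin d, ‖projL d w i‖ ^ 2 = ∑ i : Fin d, ‖w i.castSucc‖ ^ 2 := rfl
  rw [h1]
  have h2 : ∑ i : Fin d, ‖w i.castSucc‖ ^ 2
      = ∑ j ∈ Finset.univ.image (Fin.castSucc : Fin d → Fin (d+1)), ‖w j‖ ^ 2 := by
    rw [Finset.sum_image (fun x _ y _ h => Fin.castSucc_injective d h)]
  rw [h2]
  apply Finset.sum_le_sum_of_subset_of_nonneg (Finset.subset_univ _)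
  intro j _ _
  positivity

lemma projL_avec (a : ℕ → ℕ → ℝ) (d m : ℕ) : projL d (avec a (d+1) m) = avec a d m := by
  ext i
  show a (Fin.castSucc i : Fin (d+1)) m = a i m
  rw [Fin.coe_castSucc]

lemma projL_xvec (x : ℕ → ℝ) (d : ℕ) : projL d (xvec x (d+1)) = xvec x d := by
  ext i
  show x (Fin.castSucc i : Fin (d+1)) = x i
  rw [Fin.coe_castSucc]

/-- The density lemma: below every condition `(f, d, ε)` of `P` and for every
positive `n` there is a condition `(g, d+1, δ)` with `{0,…,n−1}` contained in
both the domain and the range of `g`, and `δ < 1/n`. -/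
theorem density_lemma (a : ℕ → ℕ → ℝ) (x : ℕ → ℝ) (C : ℕ → ℝ)
    (hCpos : ∀ d, 0 < d → 0 < C d)
    (hCpc : ∀ d, 0 < d → PolyConf d (C d))
    (hCmono : ∀ d e, 0 < d → d ≤ e → C d ≤ C e)
    (hcc : ∀ i, CondConv (a i))
    (hind : ∀ c : ℕ → ℝ, (Function.support c).Finite →
      (Summable fun n => |∑ᶠ i, c i * a i n|) → c = 0)
    (f : ℕ → ℕ) (nf d : ℕ) (ε : ℚ)
    (hf : PCond a x C f nf d ε)
    (n : ℕ) (hn : 0 < n) :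
    ∃ g : ℕ → ℕ, ∃ ng : ℕ, ∃ δ : ℚ,
      PCond a x C g ng (d + 1) δ ∧
      PLe a g ng (d + 1) δ f nf d ε ∧
      n ≤ ng ∧ (∀ m < n, ∃ k < ng, g k = m) ∧ (δ : ℝ) < 1 / n := by
  classical
  obtain ⟨hfinj, hd, hεpos, happrox, hsmall⟩ := hf
  have hεr : (0:ℝ) < (ε:ℝ) := by exact_mod_cast hεpos
  have hCd : 0 < C d := hCpos d hd
  have hCe : 0 < C (d+1) := hCpos (d+1) (by omega)
  set fsd := ∑ k ∈ Finset.range nf, avec a d (f k) with hfsd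
  set fse := ∑ k ∈ Finset.range nf, avec a (d+1) (f k) with hfse
  set ρ : ℝ := (ε:ℝ) - ‖fsd - xvec x d‖ with hρ
  have hρpos : 0 < ρ := by
    rw [hρ]
    have := happrox
    linarith
  have hnr : (0:ℝ) < (n:ℝ) := by exact_mod_cast hn
  have hmin : (0:ℝ) < min (ρ/3) (1/(n:ℝ)) := lt_min (by linarith) (by positivity)
  obtain ⟨δ, hδ0, hδlt⟩ := exists_rat_btwn hmin
  have hδr0 : (0:ℝ) < (δ:ℝ) := hδ0
  have hδQ : 0 < δ := by exact_mod_cast hδ0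
  have hδρ : (δ:ℝ) < ρ/3 := lt_of_lt_of_le hδlt (min_le_left _ _)
  have hδn : (δ:ℝ) < 1/(n:ℝ) := lt_of_lt_of_le hδlt (min_le_right _ _)
  -- the finite set of indices with large (d+1)-dimensional vectors
  set θ₀ : ℝ := (δ:ℝ) / C (d+1) with hθ₀
  have hθ₀pos : 0 < θ₀ := div_pos hδr0 hCe
  have hBigFin : {m : ℕ | θ₀ ≤ ‖avec a (d+1) m‖}.Finite := finite_large_avec a hcc (d+1) hθ₀pos
  set BigF := hBigFin.toFinset with hBigF
  set RangeF := (Finset.range nf).image f with hRangeF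
  have hRange_coe : ∀ m : ℕ, m ∈ f '' (Set.Iio nf) ↔ m ∈ RangeF := by
    intro m
    rw [hRangeF]
    simp [Set.mem_image, Finset.mem_image]
  set Mand := (Finset.range n ∪ BigF) \ RangeF with hMand
  set N₀ := ((Mand ∪ RangeF).sup id) + 1 with hN₀def
  have hN₀ : ∀ m ∈ Mand ∪ RangeF, m < N₀ := by
    intro m hm
    exact Nat.lt_succ_of_le (Finset.le_sup (f := id) hm)
  set y := xvec x (d+1) - fse - (∑ m ∈ Mand, avec a (d+1) m) with hy
  obtain ⟨S, hS_ge, hS_err⟩ := subsetsum_dense a hcc hind (d+1) N₀ y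
    (show (0:ℝ) < (δ:ℝ)/2 by linarith)
  have hS_disj : ∀ m ∈ S, m ∉ Mand ∪ RangeF := by
    intro m hm hmem
    exact absurd (hS_ge m hm) (not_le.mpr (hN₀ m hmem))
  set NewF := Mand ∪ S with hNewF
  have hdisjMS : Disjoint Mand S := by
    rw [Finset.disjoint_right]
    intro m hm hm2
    exact hS_disj m hm (Finset.mem_union_left _ hm2)
  have hNewF_Range : ∀ m ∈ NewF, m ∉ RangeF := by
    intro m hm hmR
    rcases Finset.mem_union.mp hm with h | h
    · exact (Finset.mem_sdiff.mp h).2 hmR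
    · exact hS_disj m h (Finset.mem_union_right _ hmR)
  have hNewF_not_image : ∀ m ∈ NewF, m ∉ f '' (Set.Iio nf) := by
    intro m hm hmi
    exact hNewF_Range m hm ((hRange_coe m).mp hmi)
  set Te := ∑ m ∈ NewF, avec a (d+1) m with hTe
  set Td := ∑ m ∈ NewF, avec a d m with hTd2
  have hTe_split : Te = (∑ m ∈ Mand, avec a (d+1) m) + (∑ m ∈ S, avec a (d+1) m) := by
    rw [hTe, hNewF]
    exact Finset.sum_union hdisjMS
  have herr : ‖fse + Te - xvec x (d+1)‖ < (δ:ℝ)/2 := by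
    have heq : fse + Te - xvec x (d+1) = (∑ m ∈ S, avec a (d+1) m) - y := by
      rw [hTe_split, hy]
      abel
    rw [heq]
    exact hS_err
  have hproj_fse : projL d fse = fsd := by
    rw [hfse, hfsd, map_sum]
    exact Finset.sum_congr rfl (fun k _ => projL_avec a d (f k))
  have hproj_Te : projL d Te = Td := by
    rw [hTe, hTd2, map_sum]
    exact Finset.sum_congr rfl (fun m _ => projL_avec a d m)
  have herrd : ‖fsd + Td - xvec x d‖ < (δ:ℝ)/2 := by
    have heq : fsd + Td - xvec x d = projL d (fse + Te - xvec x (d+1)) := by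
      rw [map_sub, map_add, hproj_fse, hproj_Te, projL_xvec]
    rw [heq]
    exact lt_of_le_of_lt (projL_norm d _) herr
  have hTd_bound : ‖Td‖ < ((ε:ℝ) - ρ) + (δ:ℝ)/2 := by
    have h1 : ‖Td‖ ≤ ‖fsd + Td - xvec x d‖ + ‖xvec x d - fsd‖ := by
      have h1' := norm_add_le (fsd + Td - xvec x d) (xvec x d - fsd)
      have heq : (fsd + Td - xvec x d) + (xvec x d - fsd) = Td := by abel
      rw [heq] at h1'
      exact h1'
    have h2 : ‖xvec x d - fsd‖ = (ε:ℝ) - ρ := by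
      rw [hρ, norm_sub_rev]
      ring
    linarith
  have hvsmall : ∀ m ∈ NewF, ‖avec a d m‖ < (ε:ℝ) / C d := by
    intro m hm
    exact hsmall m (hNewF_not_image m hm)
  obtain ⟨h, hh_inj, hh_img, hh_mem, hh_bound⟩ :=
    exists_good_enum d (C d) hCd (hCpc d hd) (avec a d) NewF hεr hvsmall
  set N := NewF.card with hNcard
  set ng := nf + N with hng
  set g : ℕ → ℕ := fun k => if k < nf then f k else if k - nf < N then h (k - nf) else 0
    with hgdef
  have hg_lt : ∀ k, k < nf → g k = f k := by
    intro k hk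
    simp only [hgdef, if_pos hk]
  have hg_ge : ∀ t, t < N → g (nf + t) = h t := by
    intro t ht
    have h1 : ¬ nf + t < nf := by omega
    have h2 : nf + t - nf = t := by omega
    simp only [hgdef, if_neg h1, h2, if_pos ht]
  have hh_inj' : ∀ t₁, t₁ < N → ∀ t₂, t₂ < N → h t₁ = h t₂ → t₁ = t₂ := by
    intro t₁ h₁ t₂ h₂ he
    exact hh_inj (Set.mem_Iio.mpr h₁) (Set.mem_Iio.mpr h₂) he
  have hsum_range : ∀ (F : ℕ → ℝ) , True := fun _ => trivial
  have hsum_d : ∀ j, j ≤ N → ∑ k ∈ Finset.Ico nf (nf + j), avec a d (g k)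
      = ∑ t ∈ Finset.range j, avec a d (h t) := by
    intro j hj
    rw [Finset.sum_Ico_eq_sum_range]
    have h1 : nf + j - nf = j := by omega
    rw [h1]
    apply Finset.sum_congr rfl
    intro t ht
    have ht' := Finset.mem_range.mp ht
    rw [hg_ge t (by omega : t < N)]
  have hsum_newF_d : ∑ t ∈ Finset.range N, avec a d (h t) = Td := by
    rw [hTd2, ← hh_img, Finset.sum_image ?_]
    intro t₁ h₁ t₂ h₂
    exact hh_inj' t₁ (Finset.mem_range.mp h₁) t₂ (Finset.mem_range.mp h₂)
  have hsum_newF_e : ∑ t ∈ Finset.range N, avec a (d+1) (h t) = Te := by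
    rw [hTe, ← hh_img, Finset.sum_image ?_]
    intro t₁ h₁ t₂ h₂
    exact hh_inj' t₁ (Finset.mem_range.mp h₁) t₂ (Finset.mem_range.mp h₂)
  have hsum_e : ∑ k ∈ Finset.Ico nf ng, avec a (d+1) (g k) = Te := by
    rw [Finset.sum_Ico_eq_sum_range]
    have h1 : ng - nf = N := by omega
    rw [h1, ← hsum_newF_e]
    apply Finset.sum_congr rfl
    intro t ht
    rw [hg_ge t (Finset.mem_range.mp ht)]
  have hg_cover : ∀ m ∈ NewF, ∃ k, k < ng ∧ g k = m := by
    intro m hm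
    rw [← hh_img] at hm
    obtain ⟨t, ht, rfl⟩ := Finset.mem_image.mp hm
    have htN := Finset.mem_range.mp ht
    exact ⟨nf + t, by omega, hg_ge t htN⟩
  have hδ_lt_ρ : (δ:ℝ) < ρ := by linarith
  -- PCond for g
  have hPCond : PCond a x C g ng (d + 1) δ := by
    refine ⟨?_, by omega, hδQ, ?_, ?_⟩
    · -- injectivity
      intro k₁ hk₁ k₂ hk₂ he
      rw [Set.mem_Iio] at hk₁ hk₂
      by_cases h₁ : k₁ < nf <;> by_cases h₂ : k₂ < nf
      · rw [hg_lt k₁ h₁, hg_lt k₂ h₂] at he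
        exact hfinj (Set.mem_Iio.mpr h₁) (Set.mem_Iio.mpr h₂) he
      · exfalso
        have e1 : g k₁ = f k₁ := hg_lt k₁ h₁
        have hk₂' : k₂ - nf < N := by omega
        have e2 : g k₂ = h (k₂ - nf) := by
          have : k₂ = nf + (k₂ - nf) := by omega
          conv_lhs => rw [this]
          exact hg_ge _ hk₂'
        have hmem := hh_mem (k₂ - nf) hk₂'
        apply hNewF_Range _ hmem
        rw [hRangeF, Finset.mem_image]
        exact ⟨k₁, Finset.mem_range.mpr h₁, by rw [← e1, he, e2]⟩
      · exfalso
        have e2 : g k₂ = f k₂ := hg_lt k₂ h₂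
        have hk₁' : k₁ - nf < N := by omega
        have e1 : g k₁ = h (k₁ - nf) := by
          have : k₁ = nf + (k₁ - nf) := by omega
          conv_lhs => rw [this]
          exact hg_ge _ hk₁'
        have hmem := hh_mem (k₁ - nf) hk₁'
        apply hNewF_Range _ hmem
        rw [hRangeF, Finset.mem_image]
        exact ⟨k₂, Finset.mem_range.mpr h₂, by rw [← e2, ← he, e1]⟩
      · have hk₁' : k₁ - nf < N := by omega
        have hk₂' : k₂ - nf < N := by omega
        have e1 : g k₁ = h (k₁ - nf) := by
          have : k₁ = nf + (k₁ - nf) := by omega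
          conv_lhs => rw [this]
          exact hg_ge _ hk₁'
        have e2 : g k₂ = h (k₂ - nf) := by
          have : k₂ = nf + (k₂ - nf) := by omega
          conv_lhs => rw [this]
          exact hg_ge _ hk₂'
        rw [e1, e2] at he
        have := hh_inj' _ hk₁' _ hk₂' he
        omega
    · -- approximation in dimension d+1
      have hsplit : ∑ k ∈ Finset.range ng, avec a (d+1) (g k)
          = fse + ∑ k ∈ Finset.Ico nf ng, avec a (d+1) (g k) := by
        rw [Finset.range_eq_Ico,
          ← Finset.sum_Ico_consecutive _ (Nat.zero_le nf) (show nf ≤ ng by omega)]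
        congr 1
        rw [hfse, ← Finset.range_eq_Ico]
        apply Finset.sum_congr rfl
        intro k hk
        rw [hg_lt k (Finset.mem_range.mp hk)]
      rw [hsplit, hsum_e]
      calc ‖fse + Te - xvec x (d+1)‖ < (δ:ℝ)/2 := herr
        _ < (δ:ℝ) := by linarith
    · -- small tails in dimension d+1
      intro m hm
      by_contra hcon
      push_neg at hcon
      have hmBig : m ∈ BigF := by
        rw [hBigF, Set.Finite.mem_toFinset, Set.mem_setOf_eq]
        exact hcon
      have : ∃ k, k < ng ∧ g k = m := by
        by_cases hmR : m ∈ RangeF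
        · rw [hRangeF, Finset.mem_image] at hmR
          obtain ⟨k, hk, rfl⟩ := hmR
          have hk' := Finset.mem_range.mp hk
          exact ⟨k, by omega, hg_lt k hk'⟩
        · have hmM : m ∈ Mand := by
            rw [hMand, Finset.mem_sdiff]
            exact ⟨Finset.mem_union_right _ hmBig, hmR⟩
          exact hg_cover m (Finset.mem_union_left _ hmM)
      obtain ⟨k, hk, hgk⟩ := this
      exact hm ⟨k, Set.mem_Iio.mpr hk, hgk⟩
  have hPLe : PLe a g ng (d + 1) δ f nf d ε := by
    refine ⟨by omega, hg_lt, by omega, ?_, ?_⟩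
    · -- intermediate sums
      intro m hm
      by_cases hmnf : m ≤ nf
      · have : Finset.Ico nf m = ∅ := Finset.Ico_eq_empty (by omega)
        rw [this, Finset.sum_empty, norm_zero]
        linarith
      · have hj : m - nf ≤ N := by omega
        have hm' : m = nf + (m - nf) := by omega
        rw [hm', hsum_d (m - nf) hj]
        calc ‖∑ t ∈ Finset.range (m - nf), avec a d (h t)‖
            ≤ (ε:ℝ) + ‖∑ m' ∈ NewF, avec a d m'‖ := hh_bound (m - nf) hj
          _ = (ε:ℝ) + ‖Td‖ := by rw [← hTd2]
          _ < 2 * (ε:ℝ) := by linarith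
    · -- final bound
      have heq : ∑ k ∈ Finset.Ico nf ng, avec a d (g k) = Td := by
        have : ng = nf + N := hng
        rw [this, hsum_d N le_rfl, hsum_newF_d]
      rw [heq]
      have : 2 * (δ:ℝ) + ‖Td‖ < 2 * (ε:ℝ) := by linarith
      linarith
  refine ⟨g, ng, δ, hPCond, hPLe, ?_, ?_, ?_⟩
  · -- n ≤ ng
    have hcardR : RangeF.card ≤ nf := by
      rw [hRangeF]
      calc ((Finset.range nf).image f).card ≤ (Finset.range nf).card :=
          Finset.card_image_le
        _ = nf := Finset.card_range nf
    have hsub1 : Finset.range n \ RangeF ⊆ Mand := by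
      rw [hMand]
      exact Finset.sdiff_subset_sdiff Finset.subset_union_left le_rfl
    have hsub2 : Mand ⊆ NewF := Finset.subset_union_left
    have hc1 : n - RangeF.card ≤ (Finset.range n \ RangeF).card := by
      have := Finset.le_card_sdiff RangeF (Finset.range n)
      rw [Finset.card_range] at this
      exact this
    have hc2 : (Finset.range n \ RangeF).card ≤ Mand.card := Finset.card_le_card hsub1
    have hc3 : Mand.card ≤ N := by
      rw [hNcard]
      exact Finset.card_le_card hsub2
    omega
  · -- range covers [0, n)
    intro m hmn
    by_cases hmR : m ∈ RangeF
    · rw [hRangeF, Finset.mem_image] at hmR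
      obtain ⟨k, hk, rfl⟩ := hmR
      have hk' := Finset.mem_range.mp hk
      exact ⟨k, by omega, hg_lt k hk'⟩
    · have hmM : m ∈ Mand := by
        rw [hMand, Finset.mem_sdiff]
        exact ⟨Finset.mem_union_left _ (Finset.mem_range.mpr hmn), hmR⟩
      obtain ⟨k, hk, hgk⟩ := hg_cover m (Finset.mem_union_left _ hmM)
      exact ⟨k, hk, hgk⟩
  · -- δ < 1/n
    exact hδn
end

section
/- Let ⟨aⁱ : i < ω⟩ be an independent sequence of conditionally convergent real series, let ⟨xᵢ : i < ω⟩ be a sequence of real numbers, let ⟨C_d : d ≥ 1⟩ be a nondecreasing sequence of positive constants satisfying the Polygonal Confinement property, and let P be the poset of conditions (f, d, ε) defined from these data. Suppose ⟨(f_n, d_n, ε_n) : n ∈ ℕ⟩ is a descending sequence in P such that p = ⋃_n f_n is a permutation of ℕ, sup_n d_n = ∞, and lim_{n→∞} ε_n = 0. Then for every i ∈ ℕ, the series Σ_{j∈ℕ} aⁱ_{p(j)} converges to xᵢ. -/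
open Filter

lemma euclid_sum_apply {d : ℕ} (s : Finset ℕ) (v : ℕ → EuclideanSpace ℝ (Fin d)) (j : Fin d) :
    (∑ k ∈ s, v k) j = ∑ k ∈ s, v k j := by
  classical
  induction s using Finset.induction with
  | empty => rfl
  | insert _ _ h ih => rw [Finset.sum_insert h, Finset.sum_insert h, ← ih]; rfl

lemma euclid_coord_le {d : ℕ} (v : EuclideanSpace ℝ (Fin d)) (j : Fin d) : |v j| ≤ ‖v‖ := by
  rw [EuclideanSpace.norm_eq]
  have h1 : |v j| = Real.sqrt (‖v j‖ ^ 2) := by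
    rw [Real.sqrt_sq_eq_abs]; simp [Real.norm_eq_abs, abs_abs]
  rw [h1]
  exact Real.sqrt_le_sqrt (Finset.single_le_sum (f := fun k => ‖v k‖ ^ 2)
    (fun k _ => by positivity) (Finset.mem_univ j))

/-- If `⟨(f_n, d_n, ε_n) : n ∈ ℕ⟩` is a descending sequence of conditions of `P`
whose union `p = ⋃_n f_n` is a permutation of `ℕ`, with `sup_n d_n = ∞` and
`ε_n → 0`, then `p` rearranges each series `aⁱ` to converge to `xᵢ`. -/
theorem descending_sequence_gives_rearrangement
    (a : ℕ → ℕ → ℝ) (x : ℕ → ℝ) (C : ℕ → ℝ)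
    (hCpos : ∀ d, 0 < d → 0 < C d)
    (hCpc : ∀ d, 0 < d → PolyConf d (C d))
    (hCmono : ∀ d e, 0 < d → d ≤ e → C d ≤ C e)
    (hcc : ∀ i, CondConv (a i))
    (hind : ∀ c : ℕ → ℝ, (Function.support c).Finite →
      (Summable fun n => |∑ᶠ i, c i * a i n|) → c = 0)
    (f : ℕ → ℕ → ℕ) (len : ℕ → ℕ) (d : ℕ → ℕ) (ε : ℕ → ℚ)
    (hcond : ∀ n, PCond a x C (f n) (len n) (d n) (ε n))
    (hdesc : ∀ m n, m ≤ n → PLe a (f n) (len n) (d n) (ε n) (f m) (len m) (d m) (ε m))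
    (p : Equiv.Perm ℕ)
    (hp : ∀ n, ∀ k < len n, p k = f n k)
    (hcover : ∀ k : ℕ, ∃ n, k < len n)
    (hd : ∀ D : ℕ, ∃ n, D ≤ d n)
    (hε : Tendsto (fun n => (ε n : ℝ)) atTop (nhds 0)) :
    ∀ i, Tendsto (fun N => ∑ j ∈ Finset.range N, a i (p j)) atTop (nhds (x i)) := by
  intro i
  rw [Metric.tendsto_atTop]
  intro η hη
  obtain ⟨n1, hn1⟩ := hd (i + 1)
  obtain ⟨n, hn3, hn1n⟩ :=
    ((hε.eventually (gt_mem_nhds (by positivity : (0:ℝ) < η / 3))).and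
      (eventually_ge_atTop n1)).exists
  have hdn : i < d n := lt_of_lt_of_le hn1 (hdesc n1 n hn1n).2.2.1
  set j : Fin (d n) := ⟨i, hdn⟩ with hj
  refine ⟨len n, fun N hN => ?_⟩
  obtain ⟨m0, hm0⟩ := hcover N
  set M := max m0 n with hM
  have hnM : n ≤ M := le_max_right _ _
  have hNM : N ≤ len M := le_trans hm0.le (hdesc m0 M (le_max_left _ _)).1
  have hsplit : ∑ k ∈ Finset.range N, a i (p k)
      = ∑ k ∈ Finset.range (len n), a i (f n k) + ∑ k ∈ Finset.Ico (len n) N, a i (f M k) := by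
    rw [Finset.range_eq_Ico, ← Finset.sum_Ico_consecutive _ (Nat.zero_le (len n)) hN]
    congr 1
    · rw [← Finset.range_eq_Ico]
      exact Finset.sum_congr rfl fun k hk => by
        rw [hp n k (Finset.mem_range.mp hk)]
    · exact Finset.sum_congr rfl fun k hk => by
        rw [hp M k (lt_of_lt_of_le (Finset.mem_Ico.mp hk).2 hNM)]
  have h1 : |∑ k ∈ Finset.range (len n), a i (f n k) - x i| < (ε n : ℝ) := by
    have hc := (hcond n).2.2.2.1
    have hco := euclid_coord_le ((∑ k ∈ Finset.range (len n), avec a (d n) (f n k)) - xvec x (d n)) j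
    have he : ((∑ k ∈ Finset.range (len n), avec a (d n) (f n k)) - xvec x (d n)) j
        = ∑ k ∈ Finset.range (len n), a i (f n k) - x i := by
      show (∑ k ∈ Finset.range (len n), avec a (d n) (f n k)) j - xvec x (d n) j = _
      rw [euclid_sum_apply]
      rfl
    rw [he] at hco
    exact lt_of_le_of_lt hco hc
  have h2 : |∑ k ∈ Finset.Ico (len n) N, a i (f M k)| < 2 * (ε n : ℝ) := by
    have hc := (hdesc n M hnM).2.2.2.1 N hNM
    have hco := euclid_coord_le (∑ k ∈ Finset.Ico (len n) N, avec a (d n) (f M k)) j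
    rw [euclid_sum_apply] at hco
    exact lt_of_le_of_lt hco hc
  rw [Real.dist_eq, hsplit]
  have : |∑ k ∈ Finset.range (len n), a i (f n k) + ∑ k ∈ Finset.Ico (len n) N, a i (f M k) - x i|
      ≤ |∑ k ∈ Finset.range (len n), a i (f n k) - x i|
        + |∑ k ∈ Finset.Ico (len n) N, a i (f M k)| := by
    have : ∑ k ∈ Finset.range (len n), a i (f n k) + ∑ k ∈ Finset.Ico (len n) N, a i (f M k) - x i
        = (∑ k ∈ Finset.range (len n), a i (f n k) - x i)
          + ∑ k ∈ Finset.Ico (len n) N, a i (f M k) := by ring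
    rw [this]
    exact abs_add_le _ _
  linarith
end
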